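/- Let H be a real Hilbert space, f = f₁ − f₂ : H → ℝ a DC function (f₁, f₂ finite closed convex) that is bounded below, x* ∈ H, and [d̲f(x*), d̄f(x*)] its global codifferential at x*. Let C ⊆ d̄f(x*) be such that d̄f(x*) = cl conv C, and for each z ∈ C let (a(z), v(z)) be the point of minimal norm in the closed convex set d̲f(x*) + z (with norm ‖(a,v)‖² = a² + ‖v‖²). Then x* is a global minimizer of f if and only if a(z) ≥ 0 for every z ∈ C. -/

import Mathlib

open RealInnerProductSpace

lemma key_real (c D : ℝ) (hD : 0 ≤ D)
    (h : ∀ t : ℝ, 0 < t → t ≤ 1 → 0 ≤ 2*t*c + t^2*D) : 0 ≤ c := by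
  by_contra hc
  push_neg at hc
  rcases eq_or_lt_of_le hD with hD0 | hD0
  · have := h 1 one_pos le_rfl; nlinarith
  · have ht0 : 0 < min 1 (-c/D) := lt_min one_pos (div_pos (by linarith) hD0)
    have ht1 : min 1 (-c/D) ≤ 1 := min_le_left _ _
    have := h _ ht0 ht1
    have h2 : min 1 (-c/D) ≤ -c/D := min_le_right _ _
    have h3 : (min 1 (-c/D)) * D ≤ -c := by
      have := mul_le_mul_of_nonneg_right h2 hD0.le
      calc (min 1 (-c/D)) * D ≤ (-c/D) * D := this
        _ = -c := by field_simp
    nlinarith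



set_option maxHeartbeats 1000000 in
/-- global optimality condition for a bounded-below DC function in terms
of the minimal-norm elements of d̲f(x*) + z, z ∈ C. -/
theorem global_optimality_via_codifferential
    {H : Type*} [NormedAddCommGroup H] [InnerProductSpace ℝ H] [CompleteSpace H]
    (f₁ f₂ : H → ℝ) (S₁ S₂ : Set (ℝ × H))
    (hconv₁ : ConvexOn ℝ Set.univ f₁) (hconv₂ : ConvexOn ℝ Set.univ f₂)
    (hlsc₁ : LowerSemicontinuous f₁) (hlsc₂ : LowerSemicontinuous f₂)
    (hSclosed₁ : IsClosed S₁) (hSconv₁ : Convex ℝ S₁)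
    (hSclosed₂ : IsClosed S₂) (hSconv₂ : Convex ℝ S₂)
    (hrep₁ : ∀ x, ((f₁ x : ℝ) : EReal) = ⨆ p ∈ S₁, ((p.1 + inner ℝ p.2 x : ℝ) : EReal))
    (hrep₂ : ∀ x, ((f₂ x : ℝ) : EReal) = ⨆ p ∈ S₂, ((p.1 + inner ℝ p.2 x : ℝ) : EReal))
    (hbdd : ∃ c : ℝ, ∀ x, c ≤ f₁ x - f₂ x)
    (xs : H) (dl du : Set (ℝ × H))
    (hdl : dl = {q : ℝ × H | ∃ p ∈ S₁, q = (p.1 - f₁ xs + inner ℝ p.2 xs, p.2)})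
    (hdu : du = {q : ℝ × H | ∃ p ∈ S₂, q = (-p.1 + f₂ xs - inner ℝ p.2 xs, -p.2)})
    (C : Set (ℝ × H)) (hC : C ⊆ du) (hCgen : du = closure (convexHull ℝ C))
    (m : ℝ × H → ℝ × H)
    (hmmem : ∀ z ∈ C, ∃ p ∈ dl, m z = p + z)
    (hmmin : ∀ z ∈ C, ∀ p ∈ dl,
      (m z).1 ^ 2 + ‖(m z).2‖ ^ 2 ≤ (p + z).1 ^ 2 + ‖(p + z).2‖ ^ 2) :
    (∀ x, f₁ xs - f₂ xs ≤ f₁ x - f₂ x) ↔ ∀ z ∈ C, 0 ≤ (m z).1 := by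
  obtain ⟨c, hc⟩ := hbdd
  -- term-wise upper bounds and supremum bounds from the EReal representations
  have hub₁ : ∀ (x : H), ∀ p ∈ S₁, p.1 + ⟪p.2, x⟫ ≤ f₁ x := by
    intro x p hp
    have h1 : ((p.1 + ⟪p.2, x⟫ : ℝ) : EReal) ≤ ((f₁ x : ℝ) : EReal) := by
      rw [hrep₁ x]
      exact le_iSup₂ (f := fun p (_ : p ∈ S₁) => ((p.1 + ⟪p.2, x⟫ : ℝ) : EReal)) p hp
    exact_mod_cast h1
  have hub₂ : ∀ (x : H), ∀ p ∈ S₂, p.1 + ⟪p.2, x⟫ ≤ f₂ x := by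
    intro x p hp
    have h1 : ((p.1 + ⟪p.2, x⟫ : ℝ) : EReal) ≤ ((f₂ x : ℝ) : EReal) := by
      rw [hrep₂ x]
      exact le_iSup₂ (f := fun p (_ : p ∈ S₂) => ((p.1 + ⟪p.2, x⟫ : ℝ) : EReal)) p hp
    exact_mod_cast h1
  have hsup₁ : ∀ (x : H) (B : ℝ), (∀ p ∈ S₁, p.1 + ⟪p.2, x⟫ ≤ B) → f₁ x ≤ B := by
    intro x B hB
    have h1 : ((f₁ x : ℝ) : EReal) ≤ ((B : ℝ) : EReal) := by
      rw [hrep₁ x]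
      exact iSup₂_le fun p hp => by exact_mod_cast hB p hp
    exact_mod_cast h1
  have hsup₂ : ∀ (x : H) (B : ℝ), (∀ p ∈ S₂, p.1 + ⟪p.2, x⟫ ≤ B) → f₂ x ≤ B := by
    intro x B hB
    have h1 : ((f₂ x : ℝ) : EReal) ≤ ((B : ℝ) : EReal) := by
      rw [hrep₂ x]
      exact iSup₂_le fun p hp => by exact_mod_cast hB p hp
    exact_mod_cast h1
  -- convexity of dl
  have hdlconv : ∀ p₀ ∈ dl, ∀ p ∈ dl, ∀ t : ℝ, 0 ≤ t → t ≤ 1 → (1-t) • p₀ + t • p ∈ dl := by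
    intro p₀ hp₀ p hp t h0 h1
    rw [hdl] at hp₀ hp ⊢
    obtain ⟨s₀, hs₀, e₀⟩ := hp₀
    obtain ⟨s₁, hs₁, e₁⟩ := hp
    refine ⟨(1-t) • s₀ + t • s₁, hSconv₁ hs₀ hs₁ (by linarith) h0 (by ring), ?_⟩
    rw [e₀, e₁]
    apply Prod.ext
    · simp [inner_add_left, real_inner_smul_left]
      ring
    · simp
  -- projection characterization of the minimal norm point
  have hproj : ∀ z ∈ C, ∀ p ∈ dl,
      (m z).1 ^ 2 + ‖(m z).2‖ ^ 2 ≤ (m z).1 * (p + z).1 + ⟪(m z).2, (p + z).2⟫ := by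
    intro z hz p hp
    obtain ⟨p₀, hp₀, hm⟩ := hmmem z hz
    have hpt : ∀ t : ℝ, (1-t) • p₀ + t • p + z = m z + t • (p + z - m z) := by
      intro t; rw [hm]; module
    have hkey : 0 ≤ (m z).1 * ((p+z).1 - (m z).1) + ⟪(m z).2, (p+z).2 - (m z).2⟫ := by
      apply key_real _ (((p+z).1 - (m z).1)^2 + ‖(p+z).2 - (m z).2‖^2) (by positivity)
      intro t ht0 ht1
      have hmem := hdlconv p₀ hp₀ p hp t ht0.le ht1
      have hineq := hmmin z hz _ hmem
      rw [hpt t] at hineq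
      have e1 : (m z + t • (p + z - m z)).1 = (m z).1 + t * ((p+z).1 - (m z).1) := by
        simp
      have e2 : (m z + t • (p + z - m z)).2 = (m z).2 + t • ((p+z).2 - (m z).2) := by
        simp
      rw [e1, e2] at hineq
      have e3 : ‖(m z).2 + t • ((p+z).2 - (m z).2)‖^2
          = ‖(m z).2‖^2 + 2*t*⟪(m z).2, (p+z).2 - (m z).2⟫ + t^2*‖(p+z).2 - (m z).2‖^2 := by
        rw [norm_add_sq_real, real_inner_smul_right, norm_smul, Real.norm_eq_abs, mul_pow, sq_abs]
        ring
      rw [e3] at hineq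
      nlinarith [hineq]
    rw [inner_sub_right, real_inner_self_eq_norm_sq] at hkey
    linarith
  -- lower bound on the du linear term
  have hzlow : ∀ z ∈ du, ∀ y : H, f₂ xs - f₂ y ≤ z.1 + ⟪z.2, y - xs⟫ := by
    intro z hz y
    rw [hdu] at hz
    obtain ⟨p, hp, rfl⟩ := hz
    have h1 := hub₂ y p hp
    simp only [inner_neg_left, inner_sub_right]
    linarith
  -- sup over dl + z, lower and upper bounds
  have hqle : ∀ z : ℝ × H, ∀ (w : H), ∀ p ∈ dl,
      (p+z).1 + ⟪(p+z).2, w⟫ ≤ f₁ (xs+w) - f₁ xs + (z.1 + ⟪z.2, w⟫) := by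
    intro z w p hp
    rw [hdl] at hp
    obtain ⟨s, hs, rfl⟩ := hp
    have h1 := hub₁ (xs+w) s hs
    simp only [Prod.fst_add, Prod.snd_add, inner_add_left]
    rw [inner_add_right] at h1
    linarith
  have hqge : ∀ z : ℝ × H, ∀ (w : H) (B : ℝ),
      (∀ p ∈ dl, (p+z).1 + ⟪(p+z).2, w⟫ ≤ B) →
      f₁ (xs+w) - f₁ xs + (z.1 + ⟪z.2, w⟫) ≤ B := by
    intro z w B hB
    have h2 : f₁ (xs+w) ≤ B + f₁ xs - z.1 - ⟪z.2, w⟫ := by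
      apply hsup₁
      intro s hs
      have hmem : ((s.1 - f₁ xs + ⟪s.2, xs⟫, s.2) : ℝ × H) ∈ dl := by
        rw [hdl]; exact ⟨s, hs, rfl⟩
      have h3 := hB _ hmem
      simp only [Prod.fst_add, Prod.snd_add, inner_add_left] at h3
      rw [inner_add_right]
      linarith
    linarith
  constructor
  · -- global minimum implies nonnegativity of the minimal first coordinates
    intro hmin z hz
    by_contra hneg
    push_neg at hneg
    set Δ : H := ((m z).1)⁻¹ • (m z).2 with hΔ
    have hN : 0 < (m z).1^2 + ‖(m z).2‖^2 := by nlinarith [norm_nonneg (m z).2]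
    have hble : ∀ p ∈ dl, (p+z).1 + ⟪(p+z).2, Δ⟫
        ≤ ((m z).1^2 + ‖(m z).2‖^2) / (m z).1 := by
      intro p hp
      have h := hproj z hz p hp
      have hX : ⟪(p+z).2, Δ⟫ = ((m z).1)⁻¹ * ⟪(m z).2, (p+z).2⟫ := by
        rw [hΔ, real_inner_smul_right, real_inner_comm]
      rw [le_div_iff_of_neg hneg, hX]
      have hne : (m z).1 ≠ 0 := ne_of_lt hneg
      have e : ((p+z).1 + ((m z).1)⁻¹ * ⟪(m z).2, (p+z).2⟫) * (m z).1
          = (m z).1 * (p+z).1 + ⟪(m z).2, (p+z).2⟫ := by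
        field_simp
      rw [e]; exact h
    have hf := hqge z Δ _ hble
    have hlow2 := hzlow z (hC hz) (xs + Δ)
    rw [add_sub_cancel_left] at hlow2
    have hmin' := hmin (xs + Δ)
    have hBneg : ((m z).1^2 + ‖(m z).2‖^2) / (m z).1 < 0 := div_neg_of_pos_of_neg hN hneg
    linarith
  · intro hA x
    have hxsΔ : xs + (x - xs) = x := by abel
    have hCnn : ∀ z ∈ C, 0 ≤ (f₁ x - f₁ xs) + (z.1 + ⟪z.2, x - xs⟫) := by
      intro z hz
      by_contra hneg
      push_neg at hneg
      set g : ℝ := (f₁ x - f₁ xs) + (z.1 + ⟪z.2, x - xs⟫) with hgdef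
      obtain ⟨p₀, hp₀, hm⟩ := hmmem z hz
      have hm1 : 0 ≤ (m z).1 := hA z hz
      set M : ℝ := f₁ xs - f₂ xs - c with hMdef
      have hGlb : ∀ w : H, -M ≤ f₁ (xs + w) - f₁ xs + (z.1 + ⟪z.2, w⟫) := by
        intro w
        have h1 := hzlow z (hC hz) (xs + w)
        rw [add_sub_cancel_left] at h1
        have h2 := hc (xs + w)
        rw [hMdef]
        linarith
      have hMg : -M ≤ g := by
        have h1 := hGlb (x - xs)
        rw [hxsΔ] at h1
        linarith [hgdef]
      have hMpos : 0 < M := by linarith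
      have hmz_ne : ¬((m z).1 = 0 ∧ (m z).2 = 0) := by
        rintro ⟨h1, h2⟩
        have h3 := hqle z (x - xs) p₀ hp₀
        rw [← hm, hxsΔ, h1, h2] at h3
        simp at h3
        linarith [hgdef]
      have hNpos : 0 < (m z).1^2 + ‖(m z).2‖^2 := by
        rcases eq_or_ne (m z).1 0 with h1 | h1
        · rcases eq_or_ne (m z).2 0 with h2 | h2
          · exact absurd ⟨h1, h2⟩ hmz_ne
          · have h3 : 0 < ‖(m z).2‖ := norm_pos_iff.mpr h2
            nlinarith [sq_nonneg (m z).1]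
        · rcases h1.lt_or_gt with h3 | h3 <;> nlinarith [norm_nonneg (m z).2, sq_nonneg ‖(m z).2‖]
      have main : ∀ s : ℝ, 0 ≤ s → s * (m z).1 < 1 →
          s * (((m z).1^2 + ‖(m z).2‖^2) + M * (m z).1) ≤ g + M := by
        intro s hs0 hs1
        have hlam0 : 0 < 1 - s * (m z).1 := by linarith
        have hne : (1 - s * (m z).1) ≠ 0 := ne_of_gt hlam0
        set w : H := (1 - s * (m z).1)⁻¹ • ((x - xs) - s • (m z).2) with hw
        have hble2 : ∀ p ∈ dl, (p+z).1 + ⟪(p+z).2, w⟫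
            ≤ (g - s * ((m z).1^2 + ‖(m z).2‖^2)) / (1 - s * (m z).1) := by
          intro p hp
          have h1 := hqle z (x - xs) p hp
          rw [hxsΔ] at h1
          have h1' : (p+z).1 + ⟪(p+z).2, x - xs⟫ ≤ g := by rw [hgdef]; linarith
          have h2 := hproj z hz p hp
          have hinner : ⟪(p+z).2, w⟫
              = (1 - s * (m z).1)⁻¹ * (⟪(p+z).2, x - xs⟫ - s * ⟪(m z).2, (p+z).2⟫) := by
            rw [hw, real_inner_smul_right, inner_sub_right, real_inner_smul_right, real_inner_comm ((p+z).2) ((m z).2)]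
          rw [hinner, le_div_iff₀ hlam0]
          have e : ((p+z).1 + (1 - s * (m z).1)⁻¹ * (⟪(p+z).2, x - xs⟫ - s * ⟪(m z).2, (p+z).2⟫))
                * (1 - s * (m z).1)
              = (1 - s * (m z).1) * (p+z).1 + (⟪(p+z).2, x - xs⟫ - s * ⟪(m z).2, (p+z).2⟫) := by
            field_simp
          rw [e]
          nlinarith [mul_le_mul_of_nonneg_left h2 hs0]
        have h3 := hqge z w _ hble2
        have h4 := hGlb w
        have h5 : (-M) * (1 - s * (m z).1) ≤ g - s * ((m z).1^2 + ‖(m z).2‖^2) :=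
          (le_div_iff₀ hlam0).mp (h4.trans h3)
        nlinarith [h5]
      have hcoef : 0 < ((m z).1^2 + ‖(m z).2‖^2) + M * (m z).1 := by nlinarith
      rcases eq_or_lt_of_le hm1 with h0 | h0
      · have hs0 : 0 ≤ (g+M)/((m z).1^2 + ‖(m z).2‖^2) + 1 := by
          have := div_nonneg (show (0:ℝ) ≤ g + M by linarith) hNpos.le
          linarith
        have hs1 : ((g+M)/((m z).1^2 + ‖(m z).2‖^2) + 1) * (m z).1 < 1 := by
          rw [← h0, mul_zero]; exact one_pos
        have hmain := main _ hs0 hs1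
        have e := div_mul_cancel₀ (g+M) (ne_of_gt hNpos)
        rw [← h0] at hmain e hNpos
        norm_num at hmain e hNpos
        linarith [hmain, e, hNpos]
      · have hT1 : (g+M)/(((m z).1^2 + ‖(m z).2‖^2) + M * (m z).1) < 1/(m z).1 := by
          rw [div_lt_div_iff₀ hcoef h0]
          nlinarith
        have hT0 : 0 ≤ (g+M)/(((m z).1^2 + ‖(m z).2‖^2) + M * (m z).1) :=
          div_nonneg (by linarith) hcoef.le
        set s : ℝ := ((g+M)/(((m z).1^2 + ‖(m z).2‖^2) + M * (m z).1) + 1/(m z).1)/2 with hs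
        have h1m : 0 < 1/(m z).1 := by positivity
        have hs0 : 0 ≤ s := by rw [hs]; linarith
        have hslt : s < 1/(m z).1 := by rw [hs]; linarith
        have hs1 : s * (m z).1 < 1 := by
          have h6 := mul_lt_mul_of_pos_right hslt h0
          rwa [one_div, inv_mul_cancel₀ (ne_of_gt h0)] at h6
        have hmain := main s hs0 hs1
        have hTe : ((g+M)/(((m z).1^2 + ‖(m z).2‖^2) + M * (m z).1))
            * (((m z).1^2 + ‖(m z).2‖^2) + M * (m z).1) = g + M :=
          div_mul_cancel₀ _ (ne_of_gt hcoef)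
        have hsgt : (g+M)/(((m z).1^2 + ‖(m z).2‖^2) + M * (m z).1) < s := by
          rw [hs]; linarith
        nlinarith [mul_lt_mul_of_pos_right hsgt hcoef, hTe, hmain]
    have hDconv : Convex ℝ {z : ℝ × H | 0 ≤ (f₁ x - f₁ xs) + (z.1 + ⟪z.2, x - xs⟫)} := by
      intro z₁ h₁ z₂ h₂ a b ha hb hab
      simp only [Set.mem_setOf_eq] at h₁ h₂ ⊢
      simp only [Prod.fst_add, Prod.smul_fst, Prod.snd_add, Prod.smul_snd, smul_eq_mul,
        inner_add_left, real_inner_smul_left]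
      have hsum := add_nonneg (mul_nonneg ha h₁) (mul_nonneg hb h₂)
      have hK : a*(f₁ x - f₁ xs) + b*(f₁ x - f₁ xs) = f₁ x - f₁ xs := by
        rw [← add_mul, hab, one_mul]
      nlinarith [hsum, hK]
    have hDclosed : IsClosed {z : ℝ × H | 0 ≤ (f₁ x - f₁ xs) + (z.1 + ⟪z.2, x - xs⟫)} := by
      apply isClosed_le continuous_const
      exact continuous_const.add (continuous_fst.add (continuous_snd.inner continuous_const))
    have hdusub : du ⊆ {z : ℝ × H | 0 ≤ (f₁ x - f₁ xs) + (z.1 + ⟪z.2, x - xs⟫)} := by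
      rw [hCgen]
      exact closure_minimal (convexHull_min (fun z hz => hCnn z hz) hDconv) hDclosed
    have h2 : f₂ x ≤ f₁ x - f₁ xs + f₂ xs := by
      apply hsup₂
      intro p hp
      have hzmem : ((-p.1 + f₂ xs - ⟪p.2, xs⟫, -p.2) : ℝ × H) ∈ du := by
        rw [hdu]; exact ⟨p, hp, rfl⟩
      have h3 := hdusub hzmem
      simp only [Set.mem_setOf_eq, inner_neg_left, inner_sub_right] at h3
      linarith
    linarith
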